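/- arXiv:2306.12222 — 7 statements merged into one kernel-verified Lean document; each statement's English description precedes it below -/
import Mathlib

section
/- Let F be a finite simple graph with m edges, and let n, k ≥ 1 be integers. If (G_1, …, G_k) is a rainbow F-free family of simple graphs on the vertex set [n], then there exists a rainbow F-free family (H_1, …, H_k) of simple graphs on [n] such that (a) the union of the edge sets of H_1, …, H_k equals the union of the edge sets of G_1, …, G_k, and (b) H_k ⊆ H_{k−1} ⊆ … ⊆ H_1 (as edge sets). -/
open Finset SimpleGraph

/-- A family `G_1, …, G_k` of simple graphs on `[n]` is rainbow `F`-free: there do not exist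
an injective map `ψ` from the vertices of `F` to `[n]` and an assignment `c` of pairwise
distinct indices to the edges of `F` such that the `ψ`-image of each edge `e` of `F` is an
edge of `G_{c e}`. -/
def RainbowFree {V : Type*} (F : SimpleGraph V) {n k : ℕ}
    (G : Fin k → SimpleGraph (Fin n)) : Prop :=
  ¬ ∃ (ψ : V → Fin n) (c : Sym2 V → Fin k),
      Function.Injective ψ ∧ Set.InjOn c F.edgeSet ∧
      ∀ e ∈ F.edgeSet, Sym2.map ψ e ∈ (G (c e)).edgeSet

/-- If `(G_1, …, G_k)` is a rainbow `F`-free family of graphs on `[n]`, then there is a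
rainbow `F`-free family `(H_1, …, H_k)` on `[n]` with the same union of edge sets and with
nested edge sets `H_k ⊆ H_{k−1} ⊆ … ⊆ H_1`. -/
theorem exists_nested_rainbowFree {V : Type*} [Fintype V] (F : SimpleGraph V) (m : ℕ)
    (hm : F.edgeSet.ncard = m) (n k : ℕ) (hn : 1 ≤ n) (hk : 1 ≤ k)
    (G : Fin k → SimpleGraph (Fin n)) (hG : RainbowFree F G) :
    ∃ H : Fin k → SimpleGraph (Fin n),
      RainbowFree F H ∧
      (⋃ i, (H i).edgeSet) = (⋃ i, (G i).edgeSet) ∧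
      ∀ i j : Fin k, i ≤ j → (H j).edgeSet ⊆ (H i).edgeSet := by
  classical
  -- number of graphs containing a given edge
  set ecnt : Sym2 (Fin n) → ℕ :=
    fun e => (Finset.univ.filter fun j : Fin k => e ∈ (G j).edgeSet).card with hecnt
  -- if ecnt e ≥ 1 then some graph contains e
  have hpos : ∀ e : Sym2 (Fin n), 1 ≤ ecnt e → ∃ j, e ∈ (G j).edgeSet := by
    intro e he
    obtain ⟨j, hj⟩ := Finset.card_pos.mp he
    exact ⟨j, (Finset.mem_filter.mp hj).2⟩
  -- the nested family
  set H : Fin k → SimpleGraph (Fin n) := fun i =>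
    { Adj := fun a b => i.val + 1 ≤ ecnt s(a, b)
      symm := by
        constructor
        intro a b hab
        simpa [Sym2.eq_swap] using hab
      loopless := by
        constructor
        intro a ha
        obtain ⟨j, hj⟩ := hpos _ (le_trans (Nat.le_add_left 1 i.val) ha)
        exact (G j).irrefl ((G j).mem_edgeSet.mp hj) } with hH
  have hmemH : ∀ (i : Fin k) (e : Sym2 (Fin n)),
      e ∈ (H i).edgeSet ↔ i.val + 1 ≤ ecnt e := by
    intro i e
    induction e using Sym2.ind with
    | _ a b => simp [hH, SimpleGraph.mem_edgeSet]
  refine ⟨H, ?_, ?_, ?_⟩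
  · -- rainbow freeness
    rintro ⟨ψ, c, hψ, hc, hmem⟩
    -- Hall system
    set t : F.edgeSet → Finset (Fin k) :=
      fun e => Finset.univ.filter fun j : Fin k => Sym2.map ψ e.1 ∈ (G j).edgeSet with ht
    have hinj : Function.Injective fun e : F.edgeSet => (c e.1).val := by
      intro e₁ e₂ h
      exact Subtype.ext (hc e₁.2 e₂.2 (Fin.val_injective h))
    have hall : ∀ s : Finset F.edgeSet, s.card ≤ (s.biUnion t).card := by
      intro s
      rcases s.eq_empty_or_nonempty with rfl | hs
      · simp
      obtain ⟨e₀, he₀, hmax⟩ := s.exists_max_image (fun e => (c e.1).val) hs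
      have h1 : s.card ≤ (c e₀.1).val + 1 := by
        have := Finset.card_le_card (s := s.image fun e => (c e.1).val)
          (t := Finset.range ((c e₀.1).val + 1)) (by
            intro x hx
            obtain ⟨e, he, rfl⟩ := Finset.mem_image.mp hx
            exact Finset.mem_range.mpr (Nat.lt_succ_of_le (hmax e he)))
        rwa [Finset.card_image_of_injective _ hinj, Finset.card_range] at this
      have h2 : (c e₀.1).val + 1 ≤ (t e₀).card := by
        have := (hmemH (c e₀.1) (Sym2.map ψ e₀.1)).mp (hmem e₀.1 e₀.2)
        simpa [ht, hecnt] using this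
      have h3 : (t e₀).card ≤ (s.biUnion t).card :=
        Finset.card_le_card (Finset.subset_biUnion_of_mem t he₀)
      exact le_trans h1 (le_trans h2 h3)
    obtain ⟨f, hf, hft⟩ :=
      (Finset.all_card_le_biUnion_card_iff_exists_injective t).mp hall
    have hk0 : Fin k := ⟨0, hk⟩
    set c' : Sym2 V → Fin k :=
      fun e => if h : e ∈ F.edgeSet then f ⟨e, h⟩ else hk0 with hc'
    refine hG ⟨ψ, c', hψ, ?_, ?_⟩
    · intro e₁ h₁ e₂ h₂ h
      have : f ⟨e₁, h₁⟩ = f ⟨e₂, h₂⟩ := by simpa [hc', h₁, h₂] using h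
      exact congrArg Subtype.val (hf this)
    · intro e he
      have := hft ⟨e, he⟩
      simp only [ht, Finset.mem_filter] at this
      simpa [hc', he] using this.2
  · -- same union
    ext x
    simp only [Set.mem_iUnion, hmemH]
    constructor
    · rintro ⟨i, hi⟩
      exact hpos x (le_trans (Nat.le_add_left 1 i.val) hi)
    · rintro ⟨j, hj⟩
      refine ⟨⟨0, hk⟩, ?_⟩
      simpa [hecnt] using Finset.card_pos.mpr ⟨j, Finset.mem_filter.mpr ⟨Finset.mem_univ j, hj⟩⟩
  · -- nestedness
    intro i j hij e he
    rw [hmemH] at he ⊢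
    exact le_trans (Nat.add_le_add_right hij 1) he
end

section
/- Fix an integer r ≥ 3, and for each n ≥ r set k_2(n) = ⌈(C(r,2)−1)·C(n,2) / t_{r−1}(n)⌉ and k_1(n) = k_2(n) − 1. Suppose that for every n ≥ r the following two statements hold for every k-weighting f on the complete graph K_n on vertex set [n] such that no r-clique of K_n has weight sequence bound (1, 2, …, C(r,2)): (i) if k = k_1(n), then Σ_e f(e) ≤ (C(r,2)−1)·C(n,2); (ii) if k = k_2(n), then Σ_e f(e) ≤ k·t_{r−1}(n). Then for every n ≥ r−1, every k ≥ C(r,2), and every rainbow K_r-free family (G_1, …, G_k) of simple graphs on [n], one has Σ_{i=1}^{k} |E(G_i)| ≤ max{ (C(r,2)−1)·C(n,2), k·t_{r−1}(n) }. -/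
open Finset SimpleGraph

/-- `t_t(n)`: the number of edges of the Turán graph `T_t(n)`. -/
def turanE (t n : ℕ) : ℕ := (SimpleGraph.turanGraph n t).edgeFinset.card

/-- A family `G_1, …, G_k` of simple graphs on `[n]` is rainbow `K_r`-free. -/
def RainbowCliqueFree (n k r : ℕ) (G : Fin k → SimpleGraph (Fin n)) : Prop :=
  ¬ ∃ (S : Finset (Fin n)) (c : Sym2 (Fin n) → Fin k),
      S.card = r ∧
      Set.InjOn c {e : Sym2 (Fin n) | ¬ e.IsDiag ∧ ∀ v ∈ e, v ∈ S} ∧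
      ∀ u ∈ S, ∀ v ∈ S, u ≠ v → (G (c s(u, v))).Adj u v

/-- The `r`-clique `S` has weight sequence bound `(1, 2, …, C(r,2))` w.r.t. `f`: the
`C(r,2)` edges inside `S` can be enumerated `e_1, …, e_{C(r,2)}` with `f(e_i) ≥ i`. -/
def HasWSB (n r : ℕ) (f : Sym2 (Fin n) → ℕ) (S : Finset (Fin n)) : Prop :=
  ∃ g : Fin (r.choose 2) → Sym2 (Fin n),
    Function.Injective g ∧
    (∀ i, ¬ (g i).IsDiag ∧ ∀ v ∈ g i, v ∈ S) ∧
    ∀ i : Fin (r.choose 2), (i : ℕ) + 1 ≤ f (g i)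

/-- `k₂(n) = ⌈(C(r,2)−1)·C(n,2) / t_{r−1}(n)⌉`. -/
def kTwo (r n : ℕ) : ℕ :=
  ⌈(((r.choose 2 - 1) * n.choose 2 : ℕ) : ℚ) / ((turanE (r - 1) n : ℕ) : ℚ)⌉₊

-- multiplicity of an edge in the family
open Classical in
noncomputable def multW {n k : ℕ} (G : Fin k → SimpleGraph (Fin n)) (e : Sym2 (Fin n)) : ℕ :=
  (Finset.univ.filter fun i => e ∈ (G i).edgeSet).card

open Classical in
lemma multW_le {n k : ℕ} (G : Fin k → SimpleGraph (Fin n)) (e : Sym2 (Fin n)) :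
    multW G e ≤ k := by
  unfold multW
  exact (Finset.card_filter_le _ _).trans (by simp)

open Classical in
lemma sum_multW {n k : ℕ} (G : Fin k → SimpleGraph (Fin n)) :
    ∑ i, (G i).edgeSet.ncard = ∑ e ∈ (⊤ : SimpleGraph (Fin n)).edgeFinset, multW G e := by
  unfold multW
  have h1 : ∀ i, (G i).edgeSet.ncard
      = ((⊤ : SimpleGraph (Fin n)).edgeFinset.filter (fun e => e ∈ (G i).edgeSet)).card := by
    intro i
    rw [Set.ncard_eq_toFinset_card']
    congr 1
    ext e
    simp only [Set.mem_toFinset, Finset.mem_filter, SimpleGraph.mem_edgeFinset,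
      SimpleGraph.edgeSet_top, Set.mem_setOf_eq]
    exact ⟨fun h => ⟨(G i).not_isDiag_of_mem_edgeSet h, h⟩, fun h => h.2⟩
  simp only [h1, Finset.card_filter]
  exact Finset.sum_comm

open Classical in
lemma card_cliqueEdgeSet {n r : ℕ} (S : Finset (Fin n)) (hS : S.card = r) :
    (Finset.univ.filter fun e : Sym2 (Fin n) => ¬ e.IsDiag ∧ ∀ v ∈ e, v ∈ S).card
      = r.choose 2 := by
  have h : (Finset.univ.filter fun e : Sym2 (Fin n) => ¬ e.IsDiag ∧ ∀ v ∈ e, v ∈ S)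
      = S.offDiag.image Sym2.mk.uncurry := by
    ext e
    induction e with
    | _ a b =>
      simp only [Finset.mem_filter, Finset.mem_univ, true_and, Sym2.mk_isDiag_iff,
        Finset.mem_image, Finset.mem_offDiag, Prod.exists, Sym2.mem_iff, Function.uncurry_apply_pair]
      constructor
      · rintro ⟨hab, hmem⟩
        exact ⟨a, b, ⟨hmem a (Or.inl rfl), hmem b (Or.inr rfl), hab⟩, rfl⟩
      · rintro ⟨x, y, ⟨hx, hy, hxy⟩, heq⟩
        rcases Sym2.eq_iff.mp heq with ⟨rfl, rfl⟩ | ⟨rfl, rfl⟩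
        · exact ⟨hxy, by rintro v (rfl | rfl) <;> assumption⟩
        · exact ⟨Ne.symm hxy, by rintro v (rfl | rfl) <;> assumption⟩
  rw [h, Sym2.card_image_offDiag, hS]

lemma hasWSB_mono {n r : ℕ} {f f' : Sym2 (Fin n) → ℕ} (h : ∀ e, f e ≤ f' e)
    {S : Finset (Fin n)} (hw : HasWSB n r f S) : HasWSB n r f' S := by
  obtain ⟨g, h1, h2, h3⟩ := hw
  exact ⟨g, h1, h2, fun i => (h3 i).trans (h (g i))⟩

open Classical in
lemma no_wsb_multW {n k r : ℕ} (hr : 3 ≤ r) (hk : 0 < k)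
    (G : Fin k → SimpleGraph (Fin n)) (hG : RainbowCliqueFree n k r G)
    (S : Finset (Fin n)) (hS : S.card = r) : ¬ HasWSB n r (multW G) S := by
  rintro ⟨g, hginj, hgmem, hgw⟩
  have hCpos : 0 < r.choose 2 := Nat.choose_pos (by omega)
  set A : Fin (r.choose 2) → Finset (Fin k) :=
    fun i => Finset.univ.filter fun j => g i ∈ (G j).edgeSet with hA
  have hAcard : ∀ i : Fin (r.choose 2), (i : ℕ) + 1 ≤ (A i).card := fun i => hgw i
  have hall : ∀ s : Finset (Fin (r.choose 2)), s.card ≤ (s.biUnion A).card := by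
    intro s
    rcases s.eq_empty_or_nonempty with rfl | hne
    · simp
    · have h1 : s.card ≤ ((s.max' hne : Fin (r.choose 2)) : ℕ) + 1 := by
        have hsub : s ⊆ Finset.Iic (s.max' hne) := fun x hx => Finset.mem_Iic.mpr (s.le_max' x hx)
        calc s.card ≤ (Finset.Iic (s.max' hne)).card := Finset.card_le_card hsub
          _ = _ := Fin.card_Iic _
      exact h1.trans ((hAcard _).trans
        (Finset.card_le_card (Finset.subset_biUnion_of_mem A (s.max'_mem hne))))
  obtain ⟨c', hc'inj, hc'mem⟩ := (Finset.all_card_le_biUnion_card_iff_exists_injective A).mp hall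
  set E : Finset (Sym2 (Fin n)) :=
    Finset.univ.filter (fun e : Sym2 (Fin n) => ¬ e.IsDiag ∧ ∀ v ∈ e, v ∈ S) with hE
  have hgsub : ∀ i, g i ∈ E := fun i => Finset.mem_filter.mpr ⟨Finset.mem_univ _, hgmem i⟩
  have himage : Finset.univ.image g = E := by
    apply Finset.eq_of_subset_of_card_le
    · intro e he
      obtain ⟨i, _, rfl⟩ := Finset.mem_image.mp he
      exact hgsub i
    · rw [card_cliqueEdgeSet S hS, Finset.card_image_of_injective _ hginj, Finset.card_univ,
        Fintype.card_fin]
  have hsurj : ∀ e ∈ E, ∃ i, g i = e := by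
    intro e he
    rw [← himage] at he
    obtain ⟨i, _, hi⟩ := Finset.mem_image.mp he
    exact ⟨i, hi⟩
  set c : Sym2 (Fin n) → Fin k :=
    fun e => if h : ∃ i, g i = e then c' h.choose else c' ⟨0, hCpos⟩ with hc
  apply hG
  refine ⟨S, c, hS, ?_, ?_⟩
  · intro e₁ h₁ e₂ h₂ hce
    have he₁ : ∃ i, g i = e₁ := hsurj e₁ (Finset.mem_filter.mpr ⟨Finset.mem_univ _, h₁⟩)
    have he₂ : ∃ i, g i = e₂ := hsurj e₂ (Finset.mem_filter.mpr ⟨Finset.mem_univ _, h₂⟩)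
    rw [hc] at hce
    simp only [dif_pos he₁, dif_pos he₂] at hce
    rw [← he₁.choose_spec, ← he₂.choose_spec, hc'inj hce]
  · intro u hu v hv huv
    have hmemE : s(u, v) ∈ E := by
      refine Finset.mem_filter.mpr ⟨Finset.mem_univ _, ?_, ?_⟩
      · simpa using huv
      · intro w hw
        rcases Sym2.mem_iff.mp hw with rfl | rfl <;> assumption
    have hex : ∃ i, g i = s(u, v) := hsurj _ hmemE
    have hcc : c s(u, v) = c' hex.choose := by rw [hc]; exact dif_pos hex
    have hmem := hc'mem hex.choose
    rw [hA] at hmem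
    have : g hex.choose ∈ (G (c' hex.choose)).edgeSet := (Finset.mem_filter.mp hmem).2
    rw [hex.choose_spec] at this
    rw [hcc]
    exact this

/-- If for every `n ≥ r` the two weighted bounds hold (for `k = k₁(n)` and `k = k₂(n)`),
then for every `n ≥ r−1`, `k ≥ C(r,2)` and every rainbow `K_r`-free family on `[n]`,
`Σ_i |E(G_i)| ≤ max{(C(r,2)−1)·C(n,2), k·t_{r−1}(n)}`. -/
theorem weighted_implies_rainbow (r : ℕ) (hr : 3 ≤ r)
    (hweighted : ∀ n : ℕ, r ≤ n → ∀ k : ℕ, ∀ f : Sym2 (Fin n) → ℕ,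
      (∀ e : Sym2 (Fin n), ¬ e.IsDiag → f e ≤ k) →
      (∀ S : Finset (Fin n), S.card = r → ¬ HasWSB n r f S) →
      (k = kTwo r n - 1 →
        ∑ e ∈ (⊤ : SimpleGraph (Fin n)).edgeFinset, f e ≤ (r.choose 2 - 1) * n.choose 2) ∧
      (k = kTwo r n →
        ∑ e ∈ (⊤ : SimpleGraph (Fin n)).edgeFinset, f e ≤ k * turanE (r - 1) n)) :
    ∀ n : ℕ, r - 1 ≤ n → ∀ k : ℕ, r.choose 2 ≤ k →
      ∀ G : Fin k → SimpleGraph (Fin n), RainbowCliqueFree n k r G →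
        ∑ i, (G i).edgeSet.ncard ≤
          max ((r.choose 2 - 1) * n.choose 2) (k * turanE (r - 1) n) := by
  intro n hn k hk G hG
  have hC3 : 3 ≤ r.choose 2 := by
    calc (3 : ℕ) = Nat.choose 3 2 := by decide
      _ ≤ r.choose 2 := Nat.choose_le_choose 2 hr
  have hmk : ∀ e, multW G e ≤ k := multW_le G
  have hnoW : ∀ S : Finset (Fin n), S.card = r → ¬ HasWSB n r (multW G) S :=
    no_wsb_multW hr (by omega) G hG
  have hnoW' : ∀ f : Sym2 (Fin n) → ℕ, (∀ e, f e ≤ multW G e) →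
      ∀ S : Finset (Fin n), S.card = r → ¬ HasWSB n r f S :=
    fun f hf S hS hw => hnoW S hS (hasWSB_mono hf hw)
  rw [sum_multW]
  by_cases hrn : r ≤ n
  · -- main case
    have hn2 : 2 ≤ n := by omega
    -- turanE positive
    have hadj : (turanGraph n (r - 1)).Adj ⟨0, by omega⟩ ⟨1, by omega⟩ := by
      show (0 : ℕ) % (r - 1) ≠ (1 : ℕ) % (r - 1)
      rw [Nat.zero_mod, Nat.mod_eq_of_lt (by omega)]
      omega
    have htpos : 0 < turanE (r - 1) n :=
      Finset.card_pos.mpr ⟨_, SimpleGraph.mem_edgeFinset.mpr ((SimpleGraph.mem_edgeSet _).mpr hadj)⟩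
    have hk2pos : 1 ≤ kTwo r n := by
      unfold kTwo
      rw [Nat.one_le_ceil_iff]
      apply div_pos
      · have h1 : 0 < (r.choose 2 - 1) * n.choose 2 :=
          Nat.mul_pos (by omega) (Nat.choose_pos hn2)
        exact_mod_cast h1
      · exact_mod_cast htpos
    by_cases hcase : k ≤ kTwo r n - 1
    · refine le_trans ?_ (le_max_left _ _)
      exact (hweighted n hrn (kTwo r n - 1) (multW G)
        (fun e _ => (hmk e).trans hcase) hnoW).1 rfl
    · -- k ≥ kTwo r n
      have hk2le : kTwo r n ≤ k := by omega
      set k₂ := kTwo r n with hk₂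
      set t := turanE (r - 1) n with ht
      clear_value k₂ t
      refine le_trans ?_ (le_max_right _ _)
      set f : Sym2 (Fin n) → ℕ := fun e => min (multW G e) k₂ with hf
      have h1 : ∑ e ∈ (⊤ : SimpleGraph (Fin n)).edgeFinset, f e ≤ k₂ * t := by
        rw [ht]
        exact (hweighted n hrn k₂ f (fun e _ => min_le_right _ _)
          (hnoW' f (fun e => min_le_left _ _))).2 hk₂
      set h2f : Sym2 (Fin n) → ℕ :=
        fun e => k₂ * (if k₂ + 1 ≤ multW G e then 1 else 0) with hh2f
      have hh2le : ∀ e, h2f e ≤ multW G e := by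
        intro e
        by_cases hc : k₂ + 1 ≤ multW G e
        · simp only [hh2f, if_pos hc, mul_one]; omega
        · simp only [hh2f, if_neg hc, mul_zero]; exact Nat.zero_le _
      have hh2bd : ∀ e, h2f e ≤ k₂ := by
        intro e
        simp only [hh2f]
        split <;> simp
      have h2 : ∑ e ∈ (⊤ : SimpleGraph (Fin n)).edgeFinset, h2f e ≤ k₂ * t := by
        rw [ht]
        exact (hweighted n hrn k₂ h2f (fun e _ => hh2bd e) (hnoW' h2f hh2le)).2 hk₂
      set N : ℕ := ((⊤ : SimpleGraph (Fin n)).edgeFinset.filter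
        (fun e => k₂ + 1 ≤ multW G e)).card with hN
      have hsum2 : ∑ e ∈ (⊤ : SimpleGraph (Fin n)).edgeFinset, h2f e = k₂ * N := by
        rw [hh2f, ← Finset.mul_sum, hN, Finset.card_filter]
      have hNle : N ≤ t := by
        rw [hsum2] at h2
        exact Nat.le_of_mul_le_mul_left h2 (by omega)
      have hptw : ∀ e ∈ (⊤ : SimpleGraph (Fin n)).edgeFinset,
          multW G e ≤ f e + (k - k₂) * (if k₂ + 1 ≤ multW G e then 1 else 0) := by
        intro e _
        have hb := hmk e
        by_cases hc : k₂ + 1 ≤ multW G e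
        · simp only [hf, if_pos hc, mul_one, min_eq_right (show k₂ ≤ multW G e by omega)]
          omega
        · simp only [hf, if_neg hc, mul_zero, min_eq_left (show multW G e ≤ k₂ by omega),
            add_zero]
          exact le_refl _
      calc ∑ e ∈ (⊤ : SimpleGraph (Fin n)).edgeFinset, multW G e
          ≤ ∑ e ∈ (⊤ : SimpleGraph (Fin n)).edgeFinset,
            (f e + (k - k₂) * (if k₂ + 1 ≤ multW G e then 1 else 0)) :=
            Finset.sum_le_sum hptw
        _ = (∑ e ∈ (⊤ : SimpleGraph (Fin n)).edgeFinset, f e) + (k - k₂) * N := by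
            rw [Finset.sum_add_distrib, ← Finset.mul_sum, hN, Finset.card_filter]
        _ ≤ k₂ * t + (k - k₂) * t := add_le_add h1 (Nat.mul_le_mul_left _ hNle)
        _ = k * t := by rw [← add_mul]; congr 1; omega
  · -- n = r - 1
    have hmain : turanGraph n (r - 1) = ⊤ :=
      (turanGraph_eq_top).mpr (Or.inr (by omega))
    refine le_trans ?_ (le_max_right _ _)
    have hcard : ((⊤ : SimpleGraph (Fin n)).edgeFinset).card ≤ turanE (r - 1) n :=
      Finset.card_le_card (SimpleGraph.edgeFinset_subset_edgeFinset.mpr (le_of_eq hmain.symm))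
    calc ∑ e ∈ (⊤ : SimpleGraph (Fin n)).edgeFinset, multW G e
        ≤ ∑ _e ∈ (⊤ : SimpleGraph (Fin n)).edgeFinset, k := Finset.sum_le_sum fun e _ => hmk e
      _ = ((⊤ : SimpleGraph (Fin n)).edgeFinset).card * k := by
          rw [Finset.sum_const, smul_eq_mul]
      _ ≤ turanE (r - 1) n * k := Nat.mul_le_mul_right _ hcard
      _ = k * turanE (r - 1) n := Nat.mul_comm _ _
end

section
/- Let r ≥ 4 and n ≥ r−1 be integers, and let s be an integer with 1 ≤ s ≤ min{r−1, n−1}. Then (r−1)·( t_{r−1}(n) − t_{r−1}(n−s) ) ≥ (r−1)·C(s,2) + (r−2)·s·(n−s). -/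
open Finset SimpleGraph

theorem turan_cnt_eq (t n : ℕ) (ht : 0 < t) :
    #(univ.filter (fun w : Fin n => (w : ℕ) % t = n % t)) = n / t := by
  have h1 : #(univ.filter (fun w : Fin n => (w : ℕ) % t = n % t))
      = ∑ w : Fin n, if (w : ℕ) % t = n % t then 1 else 0 := by
    rw [Finset.card_filter]
  rw [h1, Fin.sum_univ_eq_sum_range (fun i => if i % t = n % t then 1 else 0),
    ← Finset.card_filter]
  have := Nat.count_modEq_card n ht n
  rw [Nat.count_eq_card_filter_range] at this
  simpa [Nat.ModEq, eq_comm] using this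

theorem turanE_two_mul (t n : ℕ) :
    2 * turanE t n
      = ∑ v : Fin n, ∑ w : Fin n, if (v:ℕ) % t ≠ (w:ℕ) % t then 1 else 0 := by
  rw [turanE, ← SimpleGraph.sum_degrees_eq_twice_card_edges]
  refine Finset.sum_congr rfl fun v _ => ?_
  rw [← SimpleGraph.card_neighborFinset_eq_degree, neighborFinset_eq_filter, Finset.card_filter]
  exact Finset.sum_congr rfl fun w _ => rfl

theorem turan_D_succ (t n : ℕ) (ht : 0 < t) :
    (∑ v : Fin (n+1), ∑ w : Fin (n+1), if (v:ℕ) % t ≠ (w:ℕ) % t then 1 else 0)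
      = (∑ v : Fin n, ∑ w : Fin n, if (v:ℕ) % t ≠ (w:ℕ) % t then 1 else 0)
        + 2 * (n - n / t) := by
  have key : ∑ v : Fin n, (if (v:ℕ) % t ≠ n % t then 1 else 0) = n - n / t := by
    rw [← Finset.card_filter]
    have : #(univ.filter (fun w : Fin n => (w : ℕ) % t ≠ n % t))
        = Fintype.card (Fin n) - #(univ.filter (fun w : Fin n => (w : ℕ) % t = n % t)) := by
      rw [← Finset.card_univ, ← Finset.card_filter_add_card_filter_not
        (p := fun w : Fin n => (w : ℕ) % t = n % t) (s := univ)]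
      simp
    rw [this, turan_cnt_eq t n ht, Fintype.card_fin]
  rw [Fin.sum_univ_castSucc]
  have inner : ∀ v : Fin (n+1), (∑ w : Fin (n+1), if (v:ℕ) % t ≠ (w:ℕ) % t then 1 else 0)
      = (∑ w : Fin n, if (v:ℕ) % t ≠ (w:ℕ) % t then 1 else 0)
        + (if (v:ℕ) % t ≠ n % t then 1 else 0) := by
    intro v
    rw [Fin.sum_univ_castSucc]
    simp [Fin.coe_castSucc, Fin.val_last]
  simp_rw [inner, Finset.sum_add_distrib]
  simp only [Fin.coe_castSucc, Fin.val_last, ne_eq, not_true, if_neg, ite_false]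
  have key2 : ∑ v : Fin n, (if (v:ℕ) % t ≠ n % t then 1 else 0)
      = ∑ w : Fin n, (if (n:ℕ) % t ≠ (w:ℕ) % t then 1 else 0) := by
    refine Finset.sum_congr rfl fun w _ => ?_
    simp [ne_comm]
  rw [← key2, key]; ring

theorem turanE_succ (t n : ℕ) (ht : 0 < t) :
    turanE t (n + 1) = turanE t n + (n - n / t) := by
  have h1 := turanE_two_mul t (n+1)
  have h2 := turanE_two_mul t n
  have h3 := turan_D_succ t n ht
  omega

theorem turanE_key (t n s : ℕ) (ht : 0 < t) (hsn : s ≤ n) :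
    (t : ℤ) * ((turanE t n : ℤ) - (turanE t (n - s) : ℤ))
      = ((t : ℤ) - 1) * (∑ i ∈ range s, ((n - 1 - i : ℕ) : ℤ))
        + ∑ i ∈ range s, (((n - 1 - i) % t : ℕ) : ℤ) := by
  induction s with
  | zero => simp
  | succ s ih =>
    have hsn' : s ≤ n := by omega
    set k := n - 1 - s with hk
    have hns : n - s = k + 1 := by omega
    have hns1 : n - (s + 1) = k := by omega
    have hrec := turanE_succ t k ht
    have hdiv : t * (k / t) + k % t = k := Nat.div_add_mod k t
    have hle : k / t ≤ k := Nat.div_le_self k t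
    have hcast : ((turanE t (k+1) : ℤ)) = (turanE t k : ℤ) + (k : ℤ) - ((k / t : ℕ) : ℤ) := by
      rw [hrec]; push_cast [Nat.cast_sub hle]; ring
    rw [Finset.sum_range_succ, Finset.sum_range_succ, hns1, ← hk]
    have := ih hsn'
    rw [hns] at this
    have hmodZ : (t : ℤ) * ((k / t : ℕ) : ℤ) + ((k % t : ℕ) : ℤ) = (k : ℤ) := by
      exact_mod_cast hdiv
    linear_combination this + (t : ℤ) * hcast - hmodZ

theorem choose_two_le_sum_finset (k : ℕ) : ∀ S : Finset ℕ, S.card = k →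
    k.choose 2 ≤ ∑ x ∈ S, x := by
  induction k with
  | zero => intro S h; simp
  | succ k ih =>
    intro S hS
    have hne : S.Nonempty := Finset.card_pos.mp (by omega)
    set m := S.max' hne with hm
    have hsub : S ⊆ Finset.range (m + 1) := by
      intro x hx
      simp only [Finset.mem_range]
      exact Nat.lt_succ_of_le (Finset.le_max' S x hx)
    have hcard : k + 1 ≤ m + 1 := by
      have := Finset.card_le_card hsub
      simpa [hS] using this
    have hmem : m ∈ S := S.max'_mem hne
    have hsum : m + ∑ x ∈ S.erase m, x = ∑ x ∈ S, x := Finset.add_sum_erase S id hmem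
    have hcarderase : (S.erase m).card = k := by
      rw [Finset.card_erase_of_mem hmem, hS]
      omega
    have hih := ih (S.erase m) hcarderase
    have hch : (k+1).choose 2 = k.choose 2 + k := by
      rw [Nat.choose_succ_succ]
      simp [Nat.choose_one_right, Nat.add_comm]
    omega

theorem sum_mods_ge (t n s : ℕ) (ht : 0 < t) (hst : s ≤ t) (hsn : s + 1 ≤ n) :
    s.choose 2 ≤ ∑ i ∈ range s, (n - 1 - i) % t := by
  have hinj : Set.InjOn (fun i => (n - 1 - i) % t) (range s) := by
    intro i hi j hj hij
    simp only [Finset.coe_range, Set.mem_Iio] at hi hj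
    rcases le_total i j with h | h
    · -- n-1-j ≤ n-1-i
      have h1 : n - 1 - j ≤ n - 1 - i := by omega
      have h2 : (n - 1 - i) - (n - 1 - j) = j - i := by omega
      have hmeq : (n - 1 - j) ≡ (n - 1 - i) [MOD t] := by
        unfold Nat.ModEq; simp only at hij; omega
      have := (Nat.modEq_iff_dvd' h1).mp hmeq
      rw [h2] at this
      have := Nat.eq_zero_of_dvd_of_lt this (a := t)
      omega
    · have h1 : n - 1 - i ≤ n - 1 - j := by omega
      have h2 : (n - 1 - j) - (n - 1 - i) = i - j := by omega
      have hmeq : (n - 1 - i) ≡ (n - 1 - j) [MOD t] := by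
        unfold Nat.ModEq; simp only at hij; omega
      have := (Nat.modEq_iff_dvd' h1).mp hmeq
      rw [h2] at this
      have := Nat.eq_zero_of_dvd_of_lt this (a := t)
      omega
  have himg : ∑ i ∈ range s, (n - 1 - i) % t
      = ∑ x ∈ (range s).image (fun i => (n - 1 - i) % t), x := by
    rw [Finset.sum_image (fun a ha b hb h => hinj (by simpa using ha) (by simpa using hb) h)]
  have hcard : ((range s).image (fun i => (n - 1 - i) % t)).card = s := by
    rw [Finset.card_image_of_injOn hinj, Finset.card_range]
  rw [himg]
  exact choose_two_le_sum_finset s _ hcard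

/-- For `r ≥ 4`, `n ≥ r−1` and `1 ≤ s ≤ min{r−1, n−1}`,
`(r−1)·(t_{r−1}(n) − t_{r−1}(n−s)) ≥ (r−1)·C(s,2) + (r−2)·s·(n−s)`. -/
theorem turanE_diff_lower (r n s : ℕ) (hr : 4 ≤ r) (hn : r - 1 ≤ n)
    (hs1 : 1 ≤ s) (hs2 : s ≤ min (r - 1) (n - 1)) :
    ((r : ℤ) - 1) * ((turanE (r - 1) n : ℤ) - (turanE (r - 1) (n - s) : ℤ)) ≥
      ((r : ℤ) - 1) * (s.choose 2 : ℤ) + ((r : ℤ) - 2) * (s : ℤ) * ((n : ℤ) - (s : ℤ)) := by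
  set t := r - 1 with htdef
  have ht : 0 < t := by omega
  have hst : s ≤ t := by omega
  have hsn1 : s + 1 ≤ n := by omega
  have hsn : s ≤ n := by omega
  have htc : ((t : ℕ) : ℤ) = (r : ℤ) - 1 := by push_cast [htdef]; omega
  have hkey := turanE_key t n s ht hsn
  -- sum of (n-1-i) over range s
  have hA : (∑ i ∈ range s, ((n - 1 - i : ℕ) : ℤ))
      = (s : ℤ) * ((n : ℤ) - 1) - (s.choose 2 : ℤ) := by
    have h1 : (∑ i ∈ range s, ((n - 1 - i : ℕ) : ℤ))
        = ∑ i ∈ range s, ((n : ℤ) - 1 - (i : ℤ)) := by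
      refine Finset.sum_congr rfl fun i hi => ?_
      have : i < s := Finset.mem_range.mp hi
      omega
    have h2 : (∑ i ∈ range s, (i : ℤ)) = (s.choose 2 : ℤ) := by
      have h3 : (∑ i ∈ range s, i) = s.choose 2 := by
        rw [Finset.sum_range_id, Nat.choose_two_right]
      rw [← Nat.cast_sum, h3]
    rw [h1, Finset.sum_sub_distrib, h2, Finset.sum_const, Finset.card_range]
    ring
  have hM : (s.choose 2 : ℤ) ≤ ∑ i ∈ range s, (((n - 1 - i) % t : ℕ) : ℤ) := by
    have := sum_mods_ge t n s ht hst hsn1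
    calc (s.choose 2 : ℤ) ≤ ((∑ i ∈ range s, (n - 1 - i) % t : ℕ) : ℤ) := by exact_mod_cast this
      _ = ∑ i ∈ range s, (((n - 1 - i) % t : ℕ) : ℤ) := by push_cast; rfl
  rw [htc, hA] at hkey
  set C := (s.choose 2 : ℤ) with hC
  have h2C : 2 * C = (s : ℤ) * ((s : ℤ) - 1) := by
    have h := Nat.choose_two_right s
    have h2 : s.choose 2 * 2 = s * (s - 1) := by
      rw [h]
      exact Nat.div_mul_cancel (Nat.even_mul_pred_self s).two_dvd
    have : (s.choose 2 * 2 : ℤ) = ((s * (s-1) : ℕ) : ℤ) := by exact_mod_cast h2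
    push_cast [Nat.cast_sub hs1] at this
    linarith
  nlinarith [hkey, hM, h2C]
end

section
/- Let r ≥ 4 and n ≥ r+1 be integers, and let s be an integer with 1 ≤ s ≤ r−1. Then (r−1)·(C(r,2)−1)·( C(n,2) − C(n−s,2) ) ≥ C(r,2)·( (r−1)·C(s,2) + (r−2)·s·(n−s) ) + (r−1)·(n−s). -/
lemma two_choose_two (m : ℕ) : (2:ℤ) * m.choose 2 = m * (m - 1) := by
  induction m with
  | zero => simp
  | succ k ih =>
    rw [Nat.choose_succ_succ, Nat.choose_one_right]
    push_cast
    push_cast at ih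
    ring_nf
    ring_nf at ih
    linarith

/-- For `r ≥ 4`, `n ≥ r+1` and `1 ≤ s ≤ r−1`,
`(r−1)·(C(r,2)−1)·(C(n,2) − C(n−s,2)) ≥ C(r,2)·((r−1)·C(s,2) + (r−2)·s·(n−s)) + (r−1)·(n−s)`. -/
theorem choose_diff_lower (r n s : ℕ) (hr : 4 ≤ r) (hn : r + 1 ≤ n)
    (hs1 : 1 ≤ s) (hs2 : s ≤ r - 1) :
    ((r : ℤ) - 1) * ((r.choose 2 : ℤ) - 1) * ((n.choose 2 : ℤ) - ((n - s).choose 2 : ℤ)) ≥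
      (r.choose 2 : ℤ) * (((r : ℤ) - 1) * (s.choose 2 : ℤ)
          + ((r : ℤ) - 2) * (s : ℤ) * ((n : ℤ) - (s : ℤ)))
        + ((r : ℤ) - 1) * ((n : ℤ) - (s : ℤ)) := by
  have hsr : s ≤ r := le_trans hs2 (Nat.sub_le r 1)
  have hsn : s ≤ n := le_trans hsr (le_trans (Nat.le_succ r) hn)
  have hcast : ((n - s : ℕ) : ℤ) = (n : ℤ) - s := by rw [Nat.cast_sub hsn]
  have hR := two_choose_two r
  have hN := two_choose_two n
  have hS := two_choose_two s
  have hM := two_choose_two (n - s)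
  rw [hcast] at hM
  have hs2' : (s : ℤ) ≤ (r : ℤ) - 1 := by
    have : ((s:ℤ)) ≤ ((r-1 : ℕ) : ℤ) := by exact_mod_cast hs2
    rwa [Nat.cast_sub (by omega : 1 ≤ r)] at this
  have hr' : (4:ℤ) ≤ r := by exact_mod_cast hr
  have hn' : (r:ℤ) + 1 ≤ n := by exact_mod_cast hn
  have hs1' : (1:ℤ) ≤ s := by exact_mod_cast hs1
  -- F ≥ 0 certificate
  have hF : (0:ℤ) ≤ ((r:ℤ)-2)*s*(2*n - r - 1 + s*((r:ℤ)-1)) - r*((r:ℤ)-1)*s*(s-1)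
      - 4*((n:ℤ) - s) := by
    have h1 : (0:ℤ) ≤ (2*((r:ℤ)-2)*s - 4)*((n:ℤ) - r - 1) :=
      mul_nonneg (by nlinarith) (by linarith)
    have h2 : (0:ℤ) ≤ 2*((r:ℤ)-1)*((s:ℤ)-1)*((r:ℤ)-1-s) :=
      mul_nonneg (mul_nonneg (by linarith) (by linarith)) (by linarith)
    have h3 : (0:ℤ) ≤ 2*((s:ℤ)-1) := by linarith
    have h4 : (0:ℤ) ≤ 2*(r:ℤ)*((r:ℤ)-4) := mul_nonneg (by linarith) (by linarith)
    nlinarith [h1, h2, h3, h4]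
  have hK : (0:ℤ) ≤ ((r:ℤ)-1) * (((r:ℤ)-2)*s*(2*n - r - 1 + s*((r:ℤ)-1))
      - r*((r:ℤ)-1)*s*(s-1) - 4*((n:ℤ) - s)) := mul_nonneg (by linarith) hF
  rw [ge_iff_le, ← sub_nonneg]
  have h4D : 4 * ((((r : ℤ) - 1) * ((r.choose 2 : ℤ) - 1) * ((n.choose 2 : ℤ) - ((n - s).choose 2 : ℤ)))
      - ((r.choose 2 : ℤ) * (((r : ℤ) - 1) * (s.choose 2 : ℤ)
          + ((r : ℤ) - 2) * (s : ℤ) * ((n : ℤ) - (s : ℤ)))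
        + ((r : ℤ) - 1) * ((n : ℤ) - (s : ℤ)))) =
      ((r:ℤ)-1) * (((r:ℤ)-2)*s*(2*n - r - 1 + s*((r:ℤ)-1))
      - r*((r:ℤ)-1)*s*(s-1) - 4*((n:ℤ) - s)) := by
    linear_combination (((r:ℤ)-1)*(2*(n.choose 2:ℤ) - 2*((n-s).choose 2:ℤ) - (s:ℤ)*((s:ℤ)-1))
        - 2*((r:ℤ)-2)*(s:ℤ)*((n:ℤ)-(s:ℤ))) * hR
      + ((r:ℤ)-1)*((r:ℤ)*((r:ℤ)-1)-2) * hN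
      - ((r:ℤ)-1)*((r:ℤ)*((r:ℤ)-1)-2) * hM
      - 2*((r:ℤ)-1)*(r.choose 2:ℤ) * hS
  linarith [hK, h4D]
end

section
/- Let r ≥ 4 be an integer, let 2 ≤ s ≤ r−1, let δ ∈ {0,1}, and let k ≥ C(r,2) + δ be an integer. Define the sequence (c_1, …, c_s) by: if s = 2, then (c_1, c_2) = (C(r,2)−4, C(r,2)−1); if s ≥ 3, then c_1 = a_{r,s+1} and c_j = a_{r,s} + j − 1 for 2 ≤ j ≤ s. Suppose x_1 ≤ x_2 ≤ … ≤ x_s are integers with 0 ≤ x_i ≤ k for all i, and suppose there exists j ∈ {1, …, s} with x_j ≤ c_j − 1. Then Σ_{i=1}^{s} x_i ≤ (s−1)·k + a_{r,s+1} − δ. -/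
/-- `a_{r,s} = C(r,2) − C(s+1,2) + 2` for `s < r`, with `a_{r,r} = 1`. -/
def aWt (r s : ℕ) : ℕ := if s = r then 1 else r.choose 2 - (s + 1).choose 2 + 2

lemma keyZ (j s : ℤ) (hj : 2 ≤ j) (hjs : j ≤ s) (hs : 3 ≤ s) :
    2*j*j + 2*s ≤ (j-1)*(s*(s+1)) + 2 := by
  nlinarith [mul_nonneg (by linarith : (0:ℤ) ≤ j-2) (by linarith : (0:ℤ) ≤ s-j),
    mul_nonneg (by linarith : (0:ℤ) ≤ s-3) (by linarith : (0:ℤ) ≤ s-j),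
    mul_nonneg (by linarith : (0:ℤ) ≤ j-2) (by linarith : (0:ℤ) ≤ s-3),
    mul_nonneg (mul_nonneg (by linarith : (0:ℤ) ≤ j-2) (by linarith : (0:ℤ) ≤ s-j)) (by linarith : (0:ℤ) ≤ s)]

lemma coreZ (j s T : ℤ) (hj : 2 ≤ j) (hjs : j ≤ s) (hs : 3 ≤ s)
    (hT2 : 2*T = s*(s+1)) : j*j + s ≤ (j-1)*T + 1 := by
  have h := keyZ j s hj hjs hs
  have h2 : (j-1)*(s*(s+1)) = (j-1)*(2*T) := by rw [hT2]
  nlinarith [h, h2]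

lemma case1Z (j s T B : ℤ) (hj : 2 ≤ j) (hjs : j ≤ s) (hs : 3 ≤ s)
    (hT2 : 2*T = s*(s+1)) :
    j * (B - T + j) ≤ (j-1)*B + (B - T - s + 1) := by
  have h := coreZ j s T hj hjs hs hT2
  nlinarith [h]

lemma case2Z (j s T B : ℤ) (hj : 2 ≤ j) (hjs : j ≤ s) (hs : 3 ≤ s)
    (hT2 : 2*T = s*(s+1)) (hTB : T = B) :
    j * j ≤ (j-1)*B + 1 := by
  have h := coreZ j s T hj hjs hs hT2
  nlinarith [h]

lemma hT2lem (s : ℕ) : 2 * (s+1).choose 2 = s * (s+1) := by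
  rw [Nat.choose_two_right, Nat.add_sub_cancel, Nat.mul_comm (s+1) s]
  obtain ⟨m, hm⟩ := Nat.even_mul_succ_self s
  omega

lemma aWt_pos (r s : ℕ) : 1 ≤ aWt r s := by
  unfold aWt
  split
  · exact le_refl 1
  · omega

/-- Claim 3.3 core estimate: if `x_1 ≤ … ≤ x_s` are integers with `0 ≤ x_i ≤ k` and some
`x_j ≤ c_j − 1` (where `(c_1,c_2) = (C(r,2)−4, C(r,2)−1)` if `s = 2`, and `c_1 = a_{r,s+1}`,
`c_j = a_{r,s} + j − 1` for `2 ≤ j ≤ s` if `s ≥ 3`), then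
`Σ_i x_i ≤ (s−1)·k + a_{r,s+1} − δ` whenever `δ ∈ {0,1}` and `k ≥ C(r,2) + δ`. -/
theorem sum_bound_of_missing (r s δ k : ℕ) (hr : 4 ≤ r) (hs : 2 ≤ s) (hsr : s ≤ r - 1)
    (hδ : δ = 0 ∨ δ = 1) (hk : r.choose 2 + δ ≤ k)
    (c x : ℕ → ℕ)
    (hc1 : c 1 = aWt r (s + 1))
    (hc2 : s = 2 → c 2 = r.choose 2 - 1)
    (hc3 : 3 ≤ s → ∀ j : ℕ, 2 ≤ j → j ≤ s → c j = aWt r s + j - 1)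
    (hmono : ∀ i j : ℕ, 1 ≤ i → i ≤ j → j ≤ s → x i ≤ x j)
    (hxk : ∀ i : ℕ, 1 ≤ i → i ≤ s → x i ≤ k)
    (hmiss : ∃ j : ℕ, 1 ≤ j ∧ j ≤ s ∧ x j < c j) :
    ∑ i ∈ Finset.Icc 1 s, x i ≤ (s - 1) * k + aWt r (s + 1) - δ := by
  obtain ⟨j, hj1, hjs, hxj⟩ := hmiss
  have hs1r : s + 1 ≤ r := by omega
  have hA1 : 1 ≤ aWt r (s + 1) := aWt_pos r (s+1)
  have hB6 : 6 ≤ r.choose 2 := Nat.choose_le_choose 2 hr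
  -- Step 1: bound the sum by j * (c j - 1) + (s - j) * k
  have hsum : ∑ i ∈ Finset.Icc 1 s, x i ≤ j * (c j - 1) + (s - j) * k := by
    have hu : Finset.Icc 1 s = Finset.Icc 1 j ∪ Finset.Icc (j+1) s := by
      ext i; simp only [Finset.mem_Icc, Finset.mem_union]; omega
    have hd : Disjoint (Finset.Icc 1 j) (Finset.Icc (j+1) s) := by
      simp only [Finset.disjoint_left, Finset.mem_Icc]; omega
    rw [hu, Finset.sum_union hd]
    have h1 : ∑ i ∈ Finset.Icc 1 j, x i ≤ j * (c j - 1) := by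
      calc ∑ i ∈ Finset.Icc 1 j, x i ≤ ∑ _i ∈ Finset.Icc 1 j, (c j - 1) :=
            Finset.sum_le_sum (fun i hi => by
              simp only [Finset.mem_Icc] at hi
              have := hmono i j hi.1 hi.2 hjs
              omega)
        _ = j * (c j - 1) := by
            rw [Finset.sum_const, Nat.card_Icc, smul_eq_mul, Nat.add_sub_cancel]
    have h2 : ∑ i ∈ Finset.Icc (j+1) s, x i ≤ (s - j) * k := by
      calc ∑ i ∈ Finset.Icc (j+1) s, x i ≤ ∑ _i ∈ Finset.Icc (j+1) s, k :=
            Finset.sum_le_sum (fun i hi => by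
              simp only [Finset.mem_Icc] at hi
              exact hxk i (by omega) hi.2)
        _ = (s - j) * k := by
            rw [Finset.sum_const, Nat.card_Icc, smul_eq_mul]
            congr 1
            omega
    exact Nat.add_le_add h1 h2
  -- Step 2: the key arithmetic estimate
  have key2 : j * (c j - 1) + (s - j) * k + δ ≤ (s - 1) * k + aWt r (s + 1) := by
    rcases Nat.lt_or_ge j 2 with hj2 | hj2
    · -- j = 1
      have hj : j = 1 := by omega
      subst hj
      have hstep : 1 * (c 1 - 1) + δ ≤ aWt r (s + 1) := by
        rw [hc1, one_mul]; omega
      calc 1 * (c 1 - 1) + (s - 1) * k + δ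
          = (s - 1) * k + (1 * (c 1 - 1) + δ) := by ring
        _ ≤ (s - 1) * k + aWt r (s + 1) := Nat.add_le_add_left hstep _
    · -- j ≥ 2
      have hcore : j * (c j - 1) ≤ (j - 1) * r.choose 2 + aWt r (s + 1) := by
        rcases Nat.lt_or_ge s 3 with hs3 | hs3
        · -- s = 2, hence j = 2
          have hseq : s = 2 := by omega
          have hjeq : j = 2 := by omega
          subst hjeq
          rw [hc2 hseq]
          have h6 : (2+1+1).choose 2 = 6 := by decide
          have hAval : aWt r (s + 1) = r.choose 2 - 4 := by
            rw [hseq, aWt, if_neg (by omega)]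
            omega
          rw [hAval]
          omega
        · -- s ≥ 3
          have hcj : c j = aWt r s + j - 1 := hc3 hs3 j hj2 hjs
          have hTle : (s+1).choose 2 ≤ r.choose 2 := Nat.choose_le_choose 2 hs1r
          have hT2 : 2 * (s+1).choose 2 = s * (s+1) := hT2lem s
          have haWts : aWt r s = r.choose 2 - (s+1).choose 2 + 2 := by
            rw [aWt, if_neg (by omega)]
          have hX : c j - 1 = r.choose 2 - (s+1).choose 2 + j := by omega
          have hT2z : (2 : ℤ) * ((s+1).choose 2 : ℤ) = (s:ℤ) * ((s:ℤ)+1) := by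
            exact_mod_cast hT2
          have hjz : (2:ℤ) ≤ (j:ℤ) := by exact_mod_cast hj2
          have hjsz : (j:ℤ) ≤ (s:ℤ) := by exact_mod_cast hjs
          have hsz : (3:ℤ) ≤ (s:ℤ) := by exact_mod_cast hs3
          have hjsub : ((j - 1 : ℕ):ℤ) = (j:ℤ) - 1 := by omega
          have hcast : (↑(j * (c j - 1)) : ℤ) ≤ ↑((j-1) * r.choose 2 + aWt r (s+1)) →
              j * (c j - 1) ≤ (j-1) * r.choose 2 + aWt r (s+1) := fun h => by
            exact_mod_cast h
          apply hcast
          push_cast [hjsub]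
          rcases Nat.lt_or_ge (s+1) r with hlt | hge
          · -- s + 1 < r
            have hC2e := hT2lem (s+1)
            have hre : (s+1) * ((s+1)+1) = s * (s+1) + 2*(s+1) := by ring
            have hC2 : (s+1+1).choose 2 = (s+1).choose 2 + (s+1) := by omega
            have hC2le : (s+1+1).choose 2 ≤ r.choose 2 := Nat.choose_le_choose 2 (by omega)
            have hAval : aWt r (s+1) = r.choose 2 - ((s+1+1).choose 2) + 2 := by
              rw [aWt, if_neg (by omega)]
            have hAz : ((aWt r (s+1) : ℕ):ℤ) =
                (r.choose 2:ℤ) - ((s+1).choose 2:ℤ) - s + 1 := by omega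
            have hXz : ((c j - 1 : ℕ):ℤ) =
                (r.choose 2:ℤ) - ((s+1).choose 2:ℤ) + j := by omega
            rw [hXz, hAz]
            have := case1Z (j:ℤ) (s:ℤ) ((s+1).choose 2 : ℤ) (r.choose 2 : ℤ)
              hjz hjsz hsz hT2z
            linarith [this]
          · -- s + 1 = r
            have hreq : s + 1 = r := by omega
            have hTB : (s+1).choose 2 = r.choose 2 := by rw [hreq]
            have hAval : aWt r (s+1) = 1 := by rw [aWt, if_pos hreq]
            have hXz : ((c j - 1 : ℕ):ℤ) = (j:ℤ) := by omega
            have hAz : ((aWt r (s+1) : ℕ):ℤ) = 1 := by omega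
            rw [hXz, hAz]
            have hTBz : ((s+1).choose 2 : ℤ) = (r.choose 2 : ℤ) := by
              exact_mod_cast hTB
            have := case2Z (j:ℤ) (s:ℤ) ((s+1).choose 2 : ℤ) (r.choose 2 : ℤ)
              hjz hjsz hsz hT2z hTBz
            linarith [this]
      -- combine with k ≥ B + δ
      have hk1 : (j - 1) * r.choose 2 + δ ≤ (j - 1) * k := by
        have h1 : (j-1) * (r.choose 2 + δ) ≤ (j-1) * k := Nat.mul_le_mul_left _ hk
        have h2 : (j-1) * r.choose 2 + δ ≤ (j-1) * (r.choose 2 + δ) := by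
          rw [Nat.mul_add]
          have : δ ≤ (j-1) * δ := Nat.le_mul_of_pos_left δ (by omega)
          omega
        omega
      have hsplit : (s - 1) * k = (s - j) * k + (j - 1) * k := by
        rw [← Nat.add_mul]
        congr 1
        omega
      calc j * (c j - 1) + (s - j) * k + δ
          ≤ ((j - 1) * r.choose 2 + aWt r (s+1)) + (s - j) * k + δ :=
            Nat.add_le_add_right (Nat.add_le_add_right hcore _) _
        _ = (s - j) * k + ((j-1) * r.choose 2 + δ) + aWt r (s+1) := by ring
        _ ≤ (s - j) * k + (j - 1) * k + aWt r (s+1) :=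
            Nat.add_le_add_right (Nat.add_le_add_left hk1 _) _
        _ = (s - 1) * k + aWt r (s+1) := by rw [hsplit]
  have hfinal : ∑ i ∈ Finset.Icc 1 s, x i + δ ≤ (s - 1) * k + aWt r (s+1) :=
    le_trans (Nat.add_le_add_right hsum δ) key2
  exact Nat.le_sub_of_add_le hfinal
end

section
/- Let r ≥ 4 be an integer, let δ ∈ {0,1}, let k ≥ C(r,2) + δ be an integer, and let s, j be integers with 3 ≤ s ≤ r−1 and 2 ≤ j ≤ s. Then j·(a_{r,s} + j − 2) − k·(j−1) ≤ a_{r,s+1} − δ. -/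
lemma two_mul_choose_two (n : ℕ) : 2 * n.choose 2 = n * (n - 1) := by
  cases n with
  | zero => rfl
  | succ m =>
    rw [Nat.choose_two_right]
    have h2 : 2 ∣ (m + 1) * (m + 1 - 1) := by
      simpa [Nat.mul_comm] using (Nat.even_mul_succ_self m).two_dvd
    exact Nat.mul_div_cancel' h2

lemma core_ineq (j s : ℤ) (hj : 2 ≤ j) (hjs : j ≤ s) (hs : 3 ≤ s) :
    2 * j ^ 2 + 2 * s + 2 * j - 6 ≤ (j - 1) * (s * (s + 1)) := by
  nlinarith [mul_nonneg (by linarith : (0:ℤ) ≤ s - 3) (by linarith : (0:ℤ) ≤ s + 2),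
    mul_nonneg (by linarith : (0:ℤ) ≤ j - 2) (by linarith : (0:ℤ) ≤ s - j),
    mul_nonneg (mul_nonneg (by linarith : (0:ℤ) ≤ j - 2) (by linarith : (0:ℤ) ≤ s - 3))
      (by linarith : (0:ℤ) ≤ s + 2)]

/-- For `r ≥ 4`, `δ ∈ {0,1}`, `k ≥ C(r,2)+δ`, `3 ≤ s ≤ r−1` and `2 ≤ j ≤ s`,
`j·(a_{r,s} + j − 2) − k·(j−1) ≤ a_{r,s+1} − δ`. -/
theorem convexity_bound (r s j δ k : ℕ) (hr : 4 ≤ r) (hδ : δ = 0 ∨ δ = 1)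
    (hk : r.choose 2 + δ ≤ k) (hs : 3 ≤ s) (hsr : s ≤ r - 1) (hj : 2 ≤ j) (hjs : j ≤ s)  :
    (j : ℤ) * ((aWt r s : ℤ) + (j : ℤ) - 2) - (k : ℤ) * ((j : ℤ) - 1) ≤
      (aWt r (s + 1) : ℤ) - (δ : ℤ) := by
  have hrs : s + 1 ≤ r := by omega
  have hT : (s + 1).choose 2 ≤ r.choose 2 := Nat.choose_le_choose 2 hrs
  have eC : (2 : ℤ) * r.choose 2 = r * (r - 1) := by
    have := two_mul_choose_two r
    zify [show 1 ≤ r by omega] at this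
    linarith
  have eT : (2 : ℤ) * (s + 1).choose 2 = (s + 1) * s := by
    have := two_mul_choose_two (s + 1)
    push_cast at this
    linarith
  have hkz : (r.choose 2 : ℤ) + δ ≤ k := by exact_mod_cast hk
  have hji : (2 : ℤ) ≤ j := by exact_mod_cast hj
  have hjsi : (j : ℤ) ≤ s := by exact_mod_cast hjs
  have hsi : (3 : ℤ) ≤ s := by exact_mod_cast hs
  have hdi : (δ : ℤ) ≤ 1 := by rcases hδ with h | h <;> simp [h]
  have hdn : (0 : ℤ) ≤ δ := by positivity
  have hcore := core_ineq (j : ℤ) (s : ℤ) hji hjsi hsi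
  have hA : ((r.choose 2 : ℤ) + δ) * ((j : ℤ) - 1) ≤ (k : ℤ) * ((j : ℤ) - 1) :=
    mul_le_mul_of_nonneg_right hkz (by linarith)
  have hD : (0 : ℤ) ≤ ((j : ℤ) - 2) * (1 - (δ : ℤ)) :=
    mul_nonneg (by linarith) (by linarith)
  have hB : 2 * (j : ℤ) ^ 2 + 2 * s + 2 * j - 6 ≤ ((j : ℤ) - 1) * (2 * (s + 1).choose 2) := by
    rw [eT]; linarith [hcore]
  have hsne : s ≠ r := by omega
  unfold aWt
  rw [if_neg hsne]
  by_cases h : s + 1 = r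
  · rw [if_pos h]
    have hC : (r.choose 2 : ℤ) = ((s + 1).choose 2 : ℤ) := by rw [h]
    push_cast [Nat.cast_sub hT]
    nlinarith [hA, hD, hB, hC]
  · rw [if_neg h]
    have hrs2 : s + 2 ≤ r := by omega
    have hT' : (s + 2).choose 2 ≤ r.choose 2 := Nat.choose_le_choose 2 hrs2
    have eT' : (2 : ℤ) * (s + 2).choose 2 = (s + 2) * (s + 1) := by
      have := two_mul_choose_two (s + 2)
      push_cast at this
      linarith
    have hTT' : ((s + 2).choose 2 : ℤ) = ((s + 1).choose 2 : ℤ) + (s + 1) := by linarith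
    push_cast [Nat.cast_sub hT, Nat.cast_sub hT']
    nlinarith [hA, hD, hB, hTT']
end

section
/- Let n, k, r be positive integers with r ≥ 3, and let G_1, …, G_k be simple graphs on the vertex set [n] with nested edge sets G_k ⊆ G_{k−1} ⊆ … ⊆ G_1. Define f(e) = |{ i ∈ [k] : e is an edge of G_i }| for every edge e of the complete graph K_n on [n]. If the family (G_1, …, G_k) is rainbow K_r-free, then no r-clique of K_n has weight sequence bound (1, 2, …, C(r,2)) with respect to the weighting f. -/
open Finset SimpleGraph

/-- If `G_k ⊆ … ⊆ G_1` are nested graphs on `[n]`, `f(e)` counts the graphs containing `e`,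
and the family is rainbow `K_r`-free, then no `r`-clique of `K_n` has weight sequence
bound `(1, 2, …, C(r,2))` with respect to `f`. -/
theorem nested_rainbowFree_no_wsb (n k r : ℕ) (hn : 1 ≤ n) (hk : 1 ≤ k) (hr : 3 ≤ r)
    (G : Fin k → SimpleGraph (Fin n))
    (hnested : ∀ i j : Fin k, i ≤ j → (G j).edgeSet ⊆ (G i).edgeSet)
    (f : Sym2 (Fin n) → ℕ)
    (hf : ∀ e : Sym2 (Fin n), f e = Set.ncard {i : Fin k | e ∈ (G i).edgeSet})
    (hG : RainbowCliqueFree n k r G) :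
    ∀ S : Finset (Fin n), S.card = r → ¬ HasWSB n r f S := by
  intro S hS ⟨g, hginj, hgmem, hgwt⟩
  -- f e ≤ k always
  have hfk : ∀ e, f e ≤ k := by
    intro e
    rw [hf e]
    calc Set.ncard {i : Fin k | e ∈ (G i).edgeSet} ≤ Set.ncard (Set.univ : Set (Fin k)) :=
          Set.ncard_le_ncard (Set.subset_univ _) Set.finite_univ
      _ = k := by simp [Set.ncard_univ]
  -- lower set property
  have hlow : ∀ (e : Sym2 (Fin n)) (j : Fin k), (j : ℕ) < f e → e ∈ (G j).edgeSet := by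
    intro e j hj
    by_contra hje
    have hsub : {i : Fin k | e ∈ (G i).edgeSet} ⊆ ↑(Finset.Iio j) := by
      intro a ha
      simp only [Finset.coe_Iio, Set.mem_Iio]
      by_contra hle
      exact hje (hnested j a (not_lt.1 hle) ha)
    have := Set.ncard_le_ncard hsub (Finset.Iio j).finite_toSet
    rw [← hf e, Set.ncard_coe_finset, Fin.card_Iio] at this
    omega
  -- the edge finset of S
  set T : Finset (Sym2 (Fin n)) := S.offDiag.image Sym2.mk.uncurry with hT
  have hTmem : ∀ e : Sym2 (Fin n), e ∈ T ↔ ¬ e.IsDiag ∧ ∀ v ∈ e, v ∈ S := by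
    intro e
    induction e using Sym2.ind with
    | _ x y =>
      simp only [hT, Finset.mem_image, Finset.mem_offDiag, Sym2.isDiag_iff_proj_eq,
        Sym2.mem_iff, Prod.exists, Function.uncurry_apply_pair]
      constructor
      · rintro ⟨a, b, ⟨ha, hb, hab⟩, hab2⟩
        rw [Sym2.eq_iff] at hab2
        rcases hab2 with ⟨rfl, rfl⟩ | ⟨rfl, rfl⟩
        · exact ⟨hab, fun v hv => by rcases hv with rfl | rfl <;> assumption⟩
        · exact ⟨fun h => hab h.symm, fun v hv => by rcases hv with rfl | rfl <;> assumption⟩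
      · rintro ⟨hxy, hv⟩
        exact ⟨x, y, ⟨hv x (Or.inl rfl), hv y (Or.inr rfl), hxy⟩, rfl⟩
  have hTcard : T.card = r.choose 2 := by
    rw [hT, Sym2.card_image_offDiag, hS]
  -- range of g = T
  have hgT : ∀ i, g i ∈ T := fun i => (hTmem (g i)).2 (hgmem i)
  have himg : Finset.univ.image g = T := by
    apply Finset.eq_of_subset_of_card_le
    · intro e he
      rcases Finset.mem_image.1 he with ⟨i, _, rfl⟩
      exact hgT i
    · rw [hTcard, Finset.card_image_of_injective _ hginj, Finset.card_univ, Fintype.card_fin]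
  have hsurj : ∀ e ∈ T, ∃ i, g i = e := by
    intro e he
    rw [← himg] at he
    rcases Finset.mem_image.1 he with ⟨i, _, hi⟩
    exact ⟨i, hi⟩
  -- index bound
  have hib : ∀ i : Fin (r.choose 2), (i : ℕ) < k := by
    intro i
    have := hgwt i
    have := hfk (g i)
    omega
  -- the coloring
  classical
  refine hG ⟨S, fun e => if h : ∃ i, g i = e then ⟨(h.choose : ℕ), hib _⟩ else ⟨0, hk⟩, hS, ?_, ?_⟩
  · intro e1 he1 e2 he2 hc
    have h1 : ∃ i, g i = e1 := hsurj e1 ((hTmem e1).2 he1)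
    have h2 : ∃ i, g i = e2 := hsurj e2 ((hTmem e2).2 he2)
    simp only at hc
    rw [dif_pos h1, dif_pos h2] at hc
    have : h1.choose = h2.choose := Fin.ext (Fin.mk.inj_iff.1 hc)
    rw [← h1.choose_spec, ← h2.choose_spec, this]
  · intro u hu v hv huv
    have heT : s(u, v) ∈ T := (hTmem _).2 ⟨by simpa using huv, fun w hw => by
      rcases Sym2.mem_iff.1 hw with rfl | rfl <;> assumption⟩
    have h1 : ∃ i, g i = s(u, v) := hsurj _ heT
    simp only
    rw [dif_pos h1]
    have hwt := hgwt h1.choose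
    rw [h1.choose_spec] at hwt
    have : s(u, v) ∈ (G ⟨(h1.choose : ℕ), hib _⟩).edgeSet := by
      apply hlow
      simp only []
      omega
    rwa [SimpleGraph.mem_edgeSet] at this
end
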